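/- Let ℓ ≥ 2 and γ be natural numbers such that 2^γ ≥ 1 + 1/(ln(2ℓ) − 1), let n be a natural number with n ≥ 4ℓ²·ln(4ℓ), and let m ≥ 1 be any natural number. Then there exists a weak (n, ℓ, γ)-sharing set family S_1, …, S_m of size m; that is, each S_i ⊆ {1,…,n} has exactly ℓ elements and for every i ∈ {1,…,m} one has Σ_{j<i} 2^{|S_i ∩ S_j|} ≤ 2^γ·(m − 1). -/

import Mathlib

lemma residue_card_le (X r : ℕ) : ((Finset.Iic X).filter (fun k => k % 6 = r)).card ≤ X / 6 + 1 := by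
  have h : ((Finset.Iic X).filter (fun k => k % 6 = r)).card ≤ (Finset.Iic (X/6)).card := by
    apply Finset.card_le_card_of_injOn (fun k => k / 6)
    · intro k hk
      simp only [Finset.mem_coe, Finset.mem_filter, Finset.mem_Iic] at *
      exact Nat.div_le_div_right hk.1
    · intro a ha b hb hab
      simp only [Finset.coe_filter, Set.mem_setOf_eq, Finset.mem_Iic] at ha hb
      have hab' : a / 6 = b / 6 := hab
      omega
  simpa [Nat.card_Iic] using h

lemma primes_Iic_card_le (X : ℕ) :
    ((Finset.Iic X).filter Nat.Prime).card ≤ 2 * (X / 6) + 4 := by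
  classical
  have hsub : (Finset.Iic X).filter Nat.Prime ⊆
      (((Finset.Iic X).filter (fun k => k % 6 = 1)) ∪ ((Finset.Iic X).filter (fun k => k % 6 = 5)))
        ∪ ({2, 3} : Finset ℕ) := by
    intro p hp
    simp only [Finset.mem_filter, Finset.mem_Iic] at hp
    obtain ⟨hpX, hp⟩ := hp
    by_cases h2 : p = 2
    · simp [h2]
    by_cases h3 : p = 3
    · simp [h3]
    have hd2 : p % 2 ≠ 0 := by
      intro h
      exact h2 ((Nat.Prime.eq_one_or_self_of_dvd hp 2 (Nat.dvd_of_mod_eq_zero h)).resolve_left (by norm_num)).symm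
    have hd3 : p % 3 ≠ 0 := by
      intro h
      exact h3 ((Nat.Prime.eq_one_or_self_of_dvd hp 3 (Nat.dvd_of_mod_eq_zero h)).resolve_left (by norm_num)).symm
    have : p % 6 = 1 ∨ p % 6 = 5 := by omega
    rcases this with h | h <;> simp [Finset.mem_union, Finset.mem_filter, Finset.mem_Iic, hpX, h]
  calc ((Finset.Iic X).filter Nat.Prime).card ≤ _ := Finset.card_le_card hsub
    _ ≤ (((Finset.Iic X).filter (fun k => k % 6 = 1)).card + ((Finset.Iic X).filter (fun k => k % 6 = 5)).card) + ({2,3} : Finset ℕ).card := by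
        refine le_trans (Finset.card_union_le _ _) ?_
        exact Nat.add_le_add_right (Finset.card_union_le _ _) _
    _ ≤ ((X/6 + 1) + (X/6 + 1)) + 2 := by
        refine Nat.add_le_add (Nat.add_le_add (residue_card_le X 1) (residue_card_le X 5)) (by decide)
    _ = 2 * (X / 6) + 4 := by ring


set_option maxHeartbeats 1000000 in
lemma primes_big (ℓ : ℕ) (hℓ : 20 ≤ ℓ) :
    ∃ F : Finset ℕ, F.card = ℓ ∧ (∀ p ∈ F, p.Prime ∧ 2*ℓ < p) ∧
      (∑ p ∈ F, (p:ℝ)) ≤ 4*ℓ^2*Real.log (4*ℓ) := by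
  have hℓR : (20:ℝ) ≤ (ℓ:ℝ) := by exact_mod_cast hℓ
  set u : ℝ := Real.log (4*ℓ) with hu
  set K : ℕ := ⌊(4*(ℓ:ℝ))*u⌋₊ with hK
  have hu0 : 6 * Real.log 2 ≤ u := by
    have h64 : (64:ℝ) = 2^6 := by norm_num
    have : Real.log 64 ≤ Real.log (4*ℓ) := Real.log_le_log (by norm_num) (by linarith)
    rw [h64, Real.log_pow] at this
    push_cast at this
    linarith
  have hu415 : (4.15:ℝ) ≤ u := by nlinarith [Real.log_two_gt_d9]
  have hupos : (0:ℝ) < u := by linarith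
  have hKle : (K:ℝ) ≤ 4*(ℓ:ℝ)*u := Nat.floor_le (by positivity)
  have hKgt : 4*(ℓ:ℝ)*u - 1 < (K:ℝ) := Nat.sub_one_lt_floor _
  have hK331 : 331 ≤ K := by
    have : (331:ℝ) ≤ 4*(ℓ:ℝ)*u - 1 := by nlinarith
    have h2 : (331:ℝ) < (K:ℝ) + 1 := by linarith [hKgt]
    exact_mod_cast Nat.lt_add_one_iff.mp (by exact_mod_cast h2)
  have h2lK : 2*ℓ ≤ K := by
    have : (2*ℓ:ℝ) ≤ 4*(ℓ:ℝ)*u - 1 := by nlinarith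
    have h2 : (2*ℓ:ℝ) < (K:ℝ) + 1 := by linarith
    exact_mod_cast Nat.lt_add_one_iff.mp (by exact_mod_cast h2)
  -- main counting claim
  have hC : ℓ ≤ ((Finset.Ioc (2*ℓ) K).filter Nat.Prime).card := by
    by_contra hCneg
    push_neg at hCneg
    set C : ℕ := ((Finset.Ioc (2*ℓ) K).filter Nat.Prime).card with hCdef
    set N : ℕ := K / 2 with hN
    have hN4 : 4 ≤ N := by omega
    set CB : ℕ := Nat.centralBinom N with hCB
    have hCBpos : 0 < CB := Nat.centralBinom_pos N
    set c : ℕ := CB.primeFactors.card with hc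
    have hfac : CB = ∏ p ∈ CB.primeFactors, p ^ CB.factorization p := by
      conv_lhs => rw [← Nat.factorization_prod_pow_eq_self hCBpos.ne']
      rfl
    have hCBle : CB ≤ (2*N)^c := by
      rw [hfac]
      apply Finset.prod_le_pow_card
      intro p hp
      have : p ^ (((2*N).choose N).factorization p) ≤ 2*N :=
        Nat.pow_factorization_choose_le (by omega)
      simpa [hCB, Nat.centralBinom] using this
    have hpow : 4^N ≤ K^(c+1) := by
      have h1 : 4^N < N * CB := Nat.four_pow_lt_mul_centralBinom N hN4
      have h2 : N * CB ≤ (2*N) * (2*N)^c := by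
        exact Nat.mul_le_mul (by omega) hCBle
      have h3 : (2*N) * (2*N)^c ≤ K^(c+1) := by
        have h2NK : 2*N ≤ K := by omega
        calc (2*N) * (2*N)^c = (2*N)^(c+1) := by ring
        _ ≤ K^(c+1) := Nat.pow_le_pow_left h2NK _
      omega
    -- prime factors of CB are primes ≤ K
    have hsub2 : CB.primeFactors ⊆ (Finset.Iic K).filter Nat.Prime := by
      intro p hp
      have hpp : p.Prime := Nat.prime_of_mem_primeFactors hp
      have hdvd : p ∣ CB := Nat.dvd_of_mem_primeFactors hp
      have hepos : 0 < CB.factorization p := hpp.factorization_pos_of_dvd hCBpos.ne' hdvd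
      have hple : p ≤ 2*N := by
        calc p = p^1 := (pow_one p).symm
        _ ≤ p ^ (CB.factorization p) := Nat.pow_le_pow_right hpp.pos hepos
        _ ≤ 2*N := by
            have : p ^ (((2*N).choose N).factorization p) ≤ 2*N :=
              Nat.pow_factorization_choose_le (by omega)
            simpa [hCB, Nat.centralBinom] using this
      simp only [Finset.mem_filter, Finset.mem_Iic]
      exact ⟨by omega, hpp⟩
    -- split count
    have hsplit : ((Finset.Iic K).filter Nat.Prime).card
        = ((Finset.Iic (2*ℓ)).filter Nat.Prime).card + C := by
      have hun : Finset.Iic K = Finset.Iic (2*ℓ) ∪ Finset.Ioc (2*ℓ) K := by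
        ext a
        simp only [Finset.mem_Iic, Finset.mem_union, Finset.mem_Ioc]
        omega
      rw [hun, Finset.filter_union]
      apply Finset.card_union_of_disjoint
      simp only [Finset.disjoint_left, Finset.mem_filter, Finset.mem_Iic, Finset.mem_Ioc]
      rintro a ⟨ha, -⟩ ⟨⟨ha2, -⟩, -⟩
      omega
    have hcle : c ≤ ((Finset.Iic (2*ℓ)).filter Nat.Prime).card + C :=
      hsplit ▸ Finset.card_le_card hsub2
    have hA : ((Finset.Iic (2*ℓ)).filter Nat.Prime).card ≤ 2*(2*ℓ/6) + 4 := primes_Iic_card_le _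
    -- to reals
    have hlog : (N:ℝ) * Real.log 4 ≤ (c+1) * Real.log K := by
      have h4 : ((4:ℕ):ℝ)^(N:ℕ) ≤ ((K:ℕ):ℝ)^(c+1) := by exact_mod_cast hpow
      have := Real.log_le_log (by positivity) h4
      rw [Real.log_pow, Real.log_pow] at this
      push_cast at this
      push_cast
      linarith
    have hlogK : Real.log K ≤ u + Real.log u := by
      have h1 : Real.log K ≤ Real.log (4*(ℓ:ℝ)*u) := by
        apply Real.log_le_log (by positivity) hKle
      rw [Real.log_mul (by positivity) (ne_of_gt hupos)] at h1
      exact h1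
    have hlogu : Real.log u ≤ u * (3679/10000) := by
      have he : Real.log u ≤ u / Real.exp 1 := by
        have h1 : Real.log (u / Real.exp 1) ≤ u / Real.exp 1 - 1 :=
          Real.log_le_sub_one_of_pos (by positivity)
        rw [Real.log_div (ne_of_gt hupos) (ne_of_gt (Real.exp_pos 1)), Real.log_exp] at h1
        linarith
      have h2 : u / Real.exp 1 ≤ u / 2.7182818283 := by
        apply div_le_div_of_nonneg_left (le_of_lt hupos) (by norm_num) (le_of_lt Real.exp_one_gt_d9)
      have h3 : u / 2.7182818283 ≤ u * (3679/10000) := by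
        rw [div_le_iff₀ (by norm_num)]
        nlinarith
      linarith
    have hNge : (K:ℝ) ≤ 2*(N:ℝ) + 1 := by
      have h : K ≤ 2*N + 1 := by omega
      exact_mod_cast h
    have hN2 : 2*(ℓ:ℝ)*u - 1 ≤ (N:ℝ) := by linarith
    have hcR : ((c:ℝ)+1) ≤ (5/3)*(ℓ:ℝ) + 4 := by
      have hdiv : ((2*ℓ/6 : ℕ):ℝ) ≤ (2*(ℓ:ℝ))/6 := by
        have := Nat.cast_div_le (α := ℝ) (m := 2*ℓ) (n := 6)
        push_cast at this ⊢
        linarith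
      have hCR : (C:ℝ) ≤ (ℓ:ℝ) - 1 := by
        have : C + 1 ≤ ℓ := hCneg
        have := (Nat.cast_le (α := ℝ)).2 this
        push_cast at this
        linarith
      have h1 : (c:ℝ) ≤ ((2*(2*ℓ/6) + 4 : ℕ):ℝ) + (C:ℝ) := by
        have h2 : c ≤ (2*(2*ℓ/6) + 4) + C := le_trans hcle (Nat.add_le_add_right hA C)
        exact_mod_cast h2
      push_cast at h1
      linarith
    have hlog4 : ((13862/10000):ℝ) ≤ Real.log 4 := by
      have h4 : Real.log 4 = 2 * Real.log 2 := by
        rw [show (4:ℝ) = 2^2 by norm_num, Real.log_pow]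
        push_cast; ring
      rw [h4]
      nlinarith [Real.log_two_gt_d9]
    have hlog40 : (0:ℝ) ≤ Real.log 4 := by linarith
    have hlogu0 : (0:ℝ) ≤ Real.log u := Real.log_nonneg (by linarith)
    have s1 : (2*(ℓ:ℝ)*u - 1) * Real.log 4 ≤ (N:ℝ) * Real.log 4 :=
      mul_le_mul_of_nonneg_right hN2 hlog40
    have s2 : ((c:ℝ)+1) * Real.log K ≤ ((c:ℝ)+1) * (u + Real.log u) :=
      mul_le_mul_of_nonneg_left hlogK (by have := (Nat.cast_nonneg c : (0:ℝ) ≤ c); linarith)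
    have s3 : ((c:ℝ)+1) * (u + Real.log u) ≤ ((5/3)*(ℓ:ℝ) + 4) * (u + Real.log u) :=
      mul_le_mul_of_nonneg_right hcR (by linarith)
    clear_value C N CB c K u
    clear hfac hCBle hpow hsub2 hsplit hcle hA hCdef hCB hc hN hK hu hCneg hCBpos hN4 hK331 h2lK
    have key : (2*(ℓ:ℝ)*u - 1) * (13862/10000) ≤ ((5/3)*(ℓ:ℝ) + 4) * (u + u*(3679/10000)) := by
      have hne : (0:ℝ) ≤ 2*(ℓ:ℝ)*u - 1 := by nlinarith
      have h1 := mul_le_mul_of_nonneg_left hlog4 hne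
      have h2 : u + Real.log u ≤ u + u*(3679/10000) := by linarith
      have h3 := mul_le_mul_of_nonneg_left h2 (show (0:ℝ) ≤ (5/3)*(ℓ:ℝ)+4 by positivity)
      linarith [hlog, s1, s2, s3, h1, h3]
    have hℓu : 20*u + 4.15*(ℓ:ℝ) - 83 ≤ (ℓ:ℝ)*u := by
      nlinarith [mul_nonneg (sub_nonneg.2 hℓR) (sub_nonneg.2 hu415)]
    linarith only [key, hℓu, hu415, hℓR, hupos]
  obtain ⟨F, hFsub, hFcard⟩ := Finset.exists_subset_card_eq hC
  have hmem : ∀ p ∈ F, p.Prime ∧ 2*ℓ < p ∧ p ≤ K := by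
    intro p hp
    have := hFsub hp
    simp only [Finset.mem_filter, Finset.mem_Ioc] at this
    exact ⟨this.2, this.1.1, this.1.2⟩
  refine ⟨F, hFcard, fun p hp => ⟨(hmem p hp).1, (hmem p hp).2.1⟩, ?_⟩
  have h1 : ∑ p ∈ F, (p:ℝ) ≤ ∑ _p ∈ F, (4*(ℓ:ℝ)*u) := by
    apply Finset.sum_le_sum
    intro p hp
    have h2 : (p:ℝ) ≤ (K:ℝ) := by exact_mod_cast (hmem p hp).2.2
    linarith
  have h3 : ∑ _p ∈ F, (4*(ℓ:ℝ)*u) = (ℓ:ℝ) * (4*(ℓ:ℝ)*u) := by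
    rw [Finset.sum_const, hFcard]
    simp
  have h4 : (ℓ:ℝ) * (4*(ℓ:ℝ)*u) = 4*(ℓ:ℝ)^2*u := by ring
  linarith


section Construction
variable {ℓ n m : ℕ}

lemma construction (ℓ γ n m : ℕ) (hℓ : 2 ≤ ℓ) (hm : 1 ≤ m) (hγ1 : 1 ≤ γ)
    (F : Finset ℕ) (hFcard : F.card = ℓ) (hFmem : ∀ p ∈ F, p.Prime ∧ 2*ℓ < p)
    (hFsum : ∑ p ∈ F, p ≤ n) :
    ∃ S : Fin m → Finset ℕ,
      (∀ i, S i ⊆ Finset.Icc 1 n) ∧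
      (∀ i, (S i).card = ℓ) ∧
      (∀ i : Fin m,
        ∑ j ∈ Finset.univ.filter (fun j => j < i), 2 ^ ((S i ∩ S j).card)
          ≤ 2 ^ γ * (m - 1)) := by
  classical
  -- enumerate F
  have hcardF : Fintype.card F = ℓ := by rw [Fintype.card_coe, hFcard]
  let E : Fin ℓ ≃ F := (finCongr hFcard.symm).trans F.equivFin.symm
  let P : Fin ℓ → ℕ := fun x => (E x : ℕ)
  have hPmem : ∀ x, P x ∈ F := fun x => (E x).2
  have hPprime : ∀ x, (P x).Prime := fun x => (hFmem _ (hPmem x)).1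
  have hPbig : ∀ x, 2*ℓ < P x := fun x => (hFmem _ (hPmem x)).2
  have hPpos : ∀ x, 0 < P x := fun x => (hPprime x).pos
  have hPinj : Function.Injective P := fun a b hab => by
    apply E.injective
    exact Subtype.ext hab
  -- sum of P = sum over F
  have hPsum : ∑ x : Fin ℓ, P x = ∑ p ∈ F, p := by
    rw [← Finset.sum_coe_sort F (fun p => p)]
    exact (Equiv.sum_comp E (fun y => (y : ℕ)))
  -- offsets
  let o : Fin ℓ → ℕ := fun x => ∑ y ∈ Finset.Iio x, P y
  have ho : ∀ x : Fin ℓ, o x + P x = ∑ y ∈ Finset.Iic x, P y := by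
    intro x
    rw [← Finset.Iio_insert, Finset.sum_insert (Finset.notMem_Iio_self), add_comm]
  have hole : ∀ x y : Fin ℓ, x < y → o x + P x ≤ o y := by
    intro x y hxy
    rw [ho]
    apply Finset.sum_le_sum_of_subset
    intro z hz
    simp only [Finset.mem_Iic] at hz
    simp only [Finset.mem_Iio]
    exact lt_of_le_of_lt hz hxy
  have hototal : ∀ x : Fin ℓ, o x + P x ≤ n := by
    intro x
    rw [ho]
    refine le_trans (le_trans (Finset.sum_le_sum_of_subset (Finset.subset_univ _)) ?_) hFsum
    rw [hPsum]
  -- the element function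
  let e : ℕ → Fin ℓ → ℕ := fun j x => o x + j % P x + 1
  have he_le : ∀ j x, e j x ≤ o x + P x := by
    intro j x
    have := Nat.mod_lt j (hPpos x)
    simp only [e]
    omega
  have he_gt : ∀ j x, o x < e j x := by intro j x; simp only [e]; omega
  have hcross : ∀ a b (x y : Fin ℓ), e a x = e b y → x = y := by
    intro a b x y hxy
    rcases lt_trichotomy x y with h | h | h
    · exact absurd hxy (by have h1 := he_le a x; have h2 := hole x y h; have h3 := he_gt b y; omega)
    · exact h
    · exact absurd hxy (by have h1 := he_le b y; have h2 := hole y x h; have h3 := he_gt a x; omega)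
  have heinj : ∀ j, Function.Injective (e j) := fun j x y h => hcross j j x y h
  -- the family
  refine ⟨fun i => Finset.image (e i.val) Finset.univ, ?_, ?_, ?_⟩
  · intro i a ha
    simp only [Finset.mem_image, Finset.mem_univ, true_and] at ha
    obtain ⟨x, rfl⟩ := ha
    simp only [Finset.mem_Icc]
    exact ⟨by have := he_gt i.val x; omega, le_trans (he_le i.val x) (hototal x)⟩
  · intro i
    rw [Finset.card_image_of_injective _ (heinj i.val), Finset.card_univ, Fintype.card_fin]
  · intro i
    -- intersection cardinality
    have hinter : ∀ j : Fin m,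
        (Finset.image (e i.val) Finset.univ ∩ Finset.image (e j.val) Finset.univ)
          = Finset.image (e i.val) (Finset.univ.filter fun x => i.val % P x = j.val % P x) := by
      intro j
      ext a
      simp only [Finset.mem_inter, Finset.mem_image, Finset.mem_univ, true_and,
        Finset.mem_filter]
      constructor
      · rintro ⟨⟨x, rfl⟩, ⟨y, hy⟩⟩
        have hxy : y = x := hcross j.val i.val y x hy
        subst hxy
        refine ⟨y, ?_, rfl⟩
        simp only [e] at hy
        omega
      · rintro ⟨x, hx, rfl⟩
        exact ⟨⟨x, rfl⟩, ⟨x, by simp only [e]; omega⟩⟩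
    have hintercard : ∀ j : Fin m,
        (Finset.image (e i.val) Finset.univ ∩ Finset.image (e j.val) Finset.univ).card
          = (Finset.univ.filter fun x => i.val % P x = j.val % P x).card := by
      intro j
      rw [hinter j, Finset.card_image_of_injective _ (heinj i.val)]
    -- abbreviations
    set J : Finset (Fin m) := Finset.univ.filter (fun j => j < i) with hJ
    set A : Fin m → Finset (Fin ℓ) := fun j => Finset.univ.filter fun x => i.val % P x = j.val % P x with hA
    have step1 : ∑ j ∈ J, 2 ^ ((Finset.image (e i.val) Finset.univ ∩ Finset.image (e j.val) Finset.univ)).card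
        = ∑ j ∈ J, ∑ T ∈ (Finset.univ : Finset (Fin ℓ)).powerset, (if T ⊆ A j then 1 else 0) := by
      apply Finset.sum_congr rfl
      intro j _
      rw [hintercard j]
      have h1 : (2:ℕ) ^ (A j).card = (A j).powerset.card := (Finset.card_powerset _).symm
      have h2 : (A j).powerset = (Finset.univ : Finset (Fin ℓ)).powerset.filter (· ⊆ A j) := by
        ext T
        simp [Finset.mem_powerset, Finset.mem_filter]
      rw [h1, h2, Finset.card_filter]
    have step2 : ∑ j ∈ J, ∑ T ∈ (Finset.univ : Finset (Fin ℓ)).powerset, (if T ⊆ A j then 1 else 0)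
        = ∑ T ∈ (Finset.univ : Finset (Fin ℓ)).powerset, (J.filter (fun j => T ⊆ A j)).card := by
      rw [Finset.sum_comm]
      apply Finset.sum_congr rfl
      intro T _
      rw [Finset.card_filter]
    -- counting divisible differences
    have step3 : ∀ T : Finset (Fin ℓ),
        (J.filter (fun j => T ⊆ A j)).card ≤ i.val / (∏ x ∈ T, P x) := by
      intro T
      set M : ℕ := ∏ x ∈ T, P x with hM
      rw [← Nat.Ioc_filter_dvd_card_eq_div]
      apply Finset.card_le_card_of_injOn (fun j => i.val - j.val)
      · intro j hj
        simp only [Finset.mem_coe, Finset.mem_filter, hJ, Finset.mem_univ, true_and] at hj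
        obtain ⟨hji, hTA⟩ := hj
        have hjilt : j.val < i.val := hji
        simp only [Finset.mem_coe, Finset.mem_filter, Finset.mem_Ioc]
        refine ⟨⟨by omega, by omega⟩, ?_⟩
        -- M divides i - j
        have hdvd : ∀ x ∈ T, P x ∣ (i.val - j.val) := by
          intro x hx
          have hxA := hTA hx
          simp only [hA, Finset.mem_filter, Finset.mem_univ, true_and] at hxA
          exact (Nat.modEq_iff_dvd' (le_of_lt hjilt)).mp hxA.symm
        have himg : M = ∏ p ∈ T.image P, p := by
          rw [Finset.prod_image]
          intro a _ b _ hab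
          exact hPinj hab
        rw [himg]
        apply Finset.prod_primes_dvd
        · intro p hp
          simp only [Finset.mem_image] at hp
          obtain ⟨x, _, rfl⟩ := hp
          exact (hPprime x).prime
        · intro p hp
          simp only [Finset.mem_image] at hp
          obtain ⟨x, hx, rfl⟩ := hp
          exact hdvd x hx
      · intro a ha b hb hab
        simp only [Finset.coe_filter, Set.mem_setOf_eq, hJ, Finset.mem_filter, Finset.mem_univ,
          true_and] at ha hb
        have ha' : a.val < i.val := ha.1
        have hb' : b.val < i.val := hb.1
        have : i.val - a.val = i.val - b.val := hab
        have : a.val = b.val := by omega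
        exact Fin.ext this
    -- real-analytic bound on the nonempty subsets
    have hPlb : ∀ x, (2*ℓ+1 : ℝ) ≤ (P x : ℝ) := by
      intro x
      have := hPbig x
      have : (2*ℓ+1 : ℕ) ≤ P x := this
      exact_mod_cast this
    have hprod2 : ∏ x : Fin ℓ, ((1:ℝ)/(P x) + 1) ≤ 2 := by
      have hexp : ∏ x : Fin ℓ, ((1:ℝ)/(P x) + 1) ≤ Real.exp (∑ x : Fin ℓ, (1:ℝ)/(P x)) := by
        calc ∏ x : Fin ℓ, ((1:ℝ)/(P x) + 1) ≤ ∏ x : Fin ℓ, Real.exp ((1:ℝ)/(P x)) := by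
              apply Finset.prod_le_prod
              · intro x _
                positivity
              · intro x _
                linarith [Real.add_one_le_exp ((1:ℝ)/(P x))]
          _ = Real.exp (∑ x : Fin ℓ, (1:ℝ)/(P x)) := (Real.exp_sum _ _).symm
      have hsum12 : ∑ x : Fin ℓ, (1:ℝ)/(P x) ≤ 1/2 := by
        have h1 : ∑ x : Fin ℓ, (1:ℝ)/(P x) ≤ ∑ _x : Fin ℓ, (1:ℝ)/(2*ℓ+1) := by
          apply Finset.sum_le_sum
          intro x _
          apply div_le_div_of_nonneg_left (by norm_num) (by positivity) (hPlb x)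
        rw [Finset.sum_const, Finset.card_univ, Fintype.card_fin] at h1
        have hℓpos : (0:ℝ) < (ℓ:ℝ) := by positivity
        have h2 : ℓ • ((1:ℝ)/(2*(ℓ:ℝ)+1)) ≤ 1/2 := by
          rw [nsmul_eq_mul, mul_one_div, div_le_div_iff₀ (by positivity) (by norm_num)]
          push_cast
          nlinarith
        calc ∑ x : Fin ℓ, (1:ℝ)/(P x) ≤ _ := h1
          _ ≤ 1/2 := h2
      have hexp2 : Real.exp (∑ x : Fin ℓ, (1:ℝ)/(P x)) ≤ Real.exp (1/2) := Real.exp_le_exp.2 hsum12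
      have hexphalf : Real.exp (1/2) ≤ 2 := by
        have hsq : Real.exp (1/2) * Real.exp (1/2) = Real.exp 1 := by
          rw [← Real.exp_add]; norm_num
        nlinarith [Real.exp_one_lt_d9, Real.exp_pos (1/2 : ℝ)]
      linarith
    have hne_sum : ∑ T ∈ ((Finset.univ : Finset (Fin ℓ)).powerset.erase ∅), i.val / (∏ x ∈ T, P x) ≤ i.val := by
      have hcast : ((∑ T ∈ ((Finset.univ : Finset (Fin ℓ)).powerset.erase ∅), i.val / (∏ x ∈ T, P x) : ℕ) : ℝ)
          ≤ (i.val : ℝ) := by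
        push_cast
        have h1 : ∀ T ∈ ((Finset.univ : Finset (Fin ℓ)).powerset.erase ∅),
            ((i.val / (∏ x ∈ T, P x) : ℕ) : ℝ) ≤ (i.val : ℝ) * ∏ x ∈ T, (1:ℝ)/(P x) := by
          intro T _
          calc ((i.val / (∏ x ∈ T, P x) : ℕ) : ℝ) ≤ (i.val : ℝ) / ((∏ x ∈ T, P x : ℕ) : ℝ) :=
              Nat.cast_div_le
            _ = (i.val : ℝ) * ∏ x ∈ T, (1:ℝ)/(P x) := by
              rw [Nat.cast_prod, div_eq_mul_inv, ← Finset.prod_inv_distrib]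
              congr 1
              apply Finset.prod_congr rfl
              intro x _
              rw [one_div]
        calc (∑ T ∈ ((Finset.univ : Finset (Fin ℓ)).powerset.erase ∅), ((i.val / (∏ x ∈ T, P x) : ℕ) : ℝ))
            ≤ ∑ T ∈ ((Finset.univ : Finset (Fin ℓ)).powerset.erase ∅), (i.val : ℝ) * ∏ x ∈ T, (1:ℝ)/(P x) :=
              Finset.sum_le_sum h1
          _ = (i.val : ℝ) * ∑ T ∈ ((Finset.univ : Finset (Fin ℓ)).powerset.erase ∅), ∏ x ∈ T, (1:ℝ)/(P x) := by
              rw [Finset.mul_sum]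
          _ ≤ (i.val : ℝ) * 1 := by
              apply mul_le_mul_of_nonneg_left _ (by positivity)
              have hfull : ∑ T ∈ (Finset.univ : Finset (Fin ℓ)).powerset, ∏ x ∈ T, (1:ℝ)/(P x)
                  = ∏ x : Fin ℓ, ((1:ℝ)/(P x) + 1) := by
                rw [Finset.prod_add]
                apply Finset.sum_congr rfl
                intro T _
                simp
              have hsplit0 : ∑ T ∈ (Finset.univ : Finset (Fin ℓ)).powerset, ∏ x ∈ T, (1:ℝ)/(P x)
                  = ∏ x ∈ (∅ : Finset (Fin ℓ)), (1:ℝ)/(P x)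
                    + ∑ T ∈ ((Finset.univ : Finset (Fin ℓ)).powerset.erase ∅), ∏ x ∈ T, (1:ℝ)/(P x) :=
                (Finset.add_sum_erase _ _ (Finset.empty_mem_powerset _)).symm
              rw [Finset.prod_empty] at hsplit0
              have := hprod2
              rw [← hfull] at this
              linarith [hsplit0]
          _ = (i.val : ℝ) := mul_one _
      exact_mod_cast hcast
    -- put it together
    have htotal : ∑ T ∈ (Finset.univ : Finset (Fin ℓ)).powerset, (J.filter (fun j => T ⊆ A j)).card
        ≤ 2 * i.val := by
      calc ∑ T ∈ (Finset.univ : Finset (Fin ℓ)).powerset, (J.filter (fun j => T ⊆ A j)).card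
          ≤ ∑ T ∈ (Finset.univ : Finset (Fin ℓ)).powerset, i.val / (∏ x ∈ T, P x) :=
            Finset.sum_le_sum (fun T _ => step3 T)
        _ = i.val / (∏ x ∈ (∅ : Finset (Fin ℓ)), P x)
            + ∑ T ∈ ((Finset.univ : Finset (Fin ℓ)).powerset.erase ∅), i.val / (∏ x ∈ T, P x) :=
            (Finset.add_sum_erase _ _ (Finset.empty_mem_powerset _)).symm
        _ ≤ i.val + i.val := by
            rw [Finset.prod_empty, Nat.div_one]
            exact Nat.add_le_add_left hne_sum _
        _ = 2 * i.val := by ring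
    have hfinal : ∑ j ∈ J, 2 ^ ((Finset.image (e i.val) Finset.univ ∩ Finset.image (e j.val) Finset.univ)).card
        ≤ 2 * i.val := by
      rw [step1, step2]; exact htotal
    have h2γ : 2 * i.val ≤ 2^γ * (m-1) := by
      have h1 : i.val ≤ m - 1 := by omega
      have h2 : (2:ℕ) ≤ 2^γ := by
        calc (2:ℕ) = 2^1 := (pow_one 2).symm
        _ ≤ 2^γ := Nat.pow_le_pow_right (by norm_num) hγ1
      exact Nat.mul_le_mul h2 h1
    exact le_trans hfinal h2γ
end Construction


lemma primes_small (ℓ : ℕ) (h2 : 2 ≤ ℓ) (h19 : ℓ ≤ 19) :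
    ∃ F : Finset ℕ, F.card = ℓ ∧ (∀ p ∈ F, p.Prime ∧ 2*ℓ < p) ∧ (∑ p ∈ F, p) ≤ 8*ℓ^2 := by
  interval_cases ℓ
  · exact ⟨{5,7}, by decide, by decide, by decide⟩
  · exact ⟨{7,11,13}, by decide, by decide, by decide⟩
  · exact ⟨{11,13,17,19}, by decide, by decide, by decide⟩
  · exact ⟨{11,13,17,19,23}, by decide, by decide, by decide⟩
  · exact ⟨{13,17,19,23,29,31}, by decide, by decide, by decide⟩
  · exact ⟨{17,19,23,29,31,37,41}, by decide, by decide, by decide⟩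
  · exact ⟨{17,19,23,29,31,37,41,43}, by decide, by decide, by decide⟩
  · exact ⟨{19,23,29,31,37,41,43,47,53}, by decide, by decide, by decide⟩
  · exact ⟨{23,29,31,37,41,43,47,53,59,61}, by decide, by decide, by decide⟩
  · exact ⟨{23,29,31,37,41,43,47,53,59,61,67}, by decide, by decide, by decide⟩
  · exact ⟨{29,31,37,41,43,47,53,59,61,67,71,73}, by decide, by decide, by decide⟩
  · exact ⟨{29,31,37,41,43,47,53,59,61,67,71,73,79}, by decide, by decide, by decide⟩
  · exact ⟨{29,31,37,41,43,47,53,59,61,67,71,73,79,83}, by decide, by decide, by decide⟩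
  · exact ⟨{31,37,41,43,47,53,59,61,67,71,73,79,83,89,97}, by decide, by decide, by decide⟩
  · exact ⟨{37,41,43,47,53,59,61,67,71,73,79,83,89,97,101,103}, by decide, by decide, by decide⟩
  · exact ⟨{37,41,43,47,53,59,61,67,71,73,79,83,89,97,101,103,107}, by decide, by decide, by decide⟩
  · exact ⟨{37,41,43,47,53,59,61,67,71,73,79,83,89,97,101,103,107,109}, by decide, by decide, by decide⟩
  · exact ⟨{41,43,47,53,59,61,67,71,73,79,83,89,97,101,103,107,109,113,127}, by decide, by decide, by decide⟩


/-- Explicit construction of weak (n, ℓ, γ)-sharing set families of any size m,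
provided 2^γ ≥ 1 + 1/(ln(2ℓ) − 1) and n ≥ 4ℓ²·ln(4ℓ). -/
theorem stmt6 (ℓ γ n m : ℕ) (hℓ : 2 ≤ ℓ)
    (hγ : (1 : ℝ) + 1 / (Real.log (2 * ℓ) - 1) ≤ 2 ^ γ)
    (hn : (4 * ℓ ^ 2 : ℝ) * Real.log (4 * ℓ) ≤ n) (hm : 1 ≤ m) :
    ∃ S : Fin m → Finset ℕ,
      (∀ i, S i ⊆ Finset.Icc 1 n) ∧
      (∀ i, (S i).card = ℓ) ∧
      (∀ i : Fin m,
        ∑ j ∈ Finset.univ.filter (fun j => j < i), 2 ^ ((S i ∩ S j).card)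
          ≤ 2 ^ γ * (m - 1)) := by
  have hℓR : (2:ℝ) ≤ (ℓ:ℝ) := by exact_mod_cast hℓ
  have hlog2ℓ : 1 < Real.log (2*(ℓ:ℝ)) := by
    have h1 : Real.exp 1 < 4 := by
      have := Real.exp_one_lt_d9
      linarith
    have h2 : Real.log (Real.exp 1) < Real.log (2*(ℓ:ℝ)) :=
      Real.log_lt_log (Real.exp_pos 1) (by linarith)
    rwa [Real.log_exp] at h2
  have hγ1 : 1 ≤ γ := by
    by_contra h
    push_neg at h
    interval_cases γ
    simp only [pow_zero] at hγ
    have : 0 < 1 / (Real.log (2*(ℓ:ℝ)) - 1) := by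
      apply div_pos one_pos
      linarith
    push_cast at hγ
    linarith
  have hlog4ℓ : (2:ℝ) ≤ Real.log (4*(ℓ:ℝ)) := by
    have hexp2 : Real.exp 2 < 8 := by
      have h1 : Real.exp 2 = Real.exp 1 * Real.exp 1 := by
        rw [← Real.exp_add]; norm_num
      nlinarith [Real.exp_one_lt_d9, Real.exp_pos 1]
    have h2 : Real.log (Real.exp 2) < Real.log (4*(ℓ:ℝ)) :=
      Real.log_lt_log (Real.exp_pos 2) (by linarith)
    rw [Real.log_exp] at h2
    linarith
  obtain ⟨F, hFcard, hFmem, hFsumR⟩ : ∃ F : Finset ℕ, F.card = ℓ ∧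
      (∀ p ∈ F, p.Prime ∧ 2*ℓ < p) ∧ (∑ p ∈ F, (p:ℝ)) ≤ 4*(ℓ:ℝ)^2*Real.log (4*(ℓ:ℝ)) := by
    rcases le_or_gt 20 ℓ with h | h
    · exact primes_big ℓ h
    · obtain ⟨F, hc, hmem, hsum⟩ := primes_small ℓ hℓ (by omega)
      refine ⟨F, hc, hmem, ?_⟩
      have h1 : (∑ p ∈ F, (p:ℝ)) ≤ ((8*ℓ^2 : ℕ):ℝ) := by
        have : ((∑ p ∈ F, p : ℕ):ℝ) ≤ ((8*ℓ^2 : ℕ):ℝ) := Nat.cast_le.2 hsum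
        push_cast at this ⊢
        convert this using 1
      push_cast at h1
      nlinarith [hlog4ℓ, sq_nonneg (ℓ:ℝ), hℓR]
  have hFsum : ∑ p ∈ F, p ≤ n := by
    have h1 : ((∑ p ∈ F, p : ℕ):ℝ) ≤ (n:ℝ) := by
      push_cast
      calc ∑ p ∈ F, (p:ℝ) ≤ 4*(ℓ:ℝ)^2*Real.log (4*(ℓ:ℝ)) := hFsumR
        _ ≤ (n:ℝ) := by
          have := hn
          push_cast at this ⊢
          linarith
    exact_mod_cast h1
  exact construction ℓ γ n m hℓ hm hγ1 F hFcard hFmem hFsum
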